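/- If B is an M×L complex matrix with Kruskal rank at least 2N, then for any vector z ∈ ℂ^M the equation z = Bx has at most one solution x ∈ ℂ^L with at most N nonzero entries. -/

import Mathlib

/-- The Kruskal rank of a matrix `B`: the maximal `k` such that every set of `k`
columns of `B` is linearly independent. -/
noncomputable def kruskalRank {M L : ℕ} (B : Matrix (Fin M) (Fin L) ℂ) : ℕ :=
  sSup {k | k ≤ L ∧ ∀ s : Finset (Fin L), s.card = k →
    LinearIndependent ℂ (fun j : s => B.transpose (j : Fin L))}

/-- If `B` is an `M × L` complex matrix with Kruskal rank at least `2N`, then for any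
`z ∈ ℂ^M` the equation `z = B x` has at most one `N`-sparse solution `x ∈ ℂ^L`. -/
theorem stmt0 (M L N : ℕ) (B : Matrix (Fin M) (Fin L) ℂ)
    (hkr : 2 * N ≤ kruskalRank B)
    (z : Fin M → ℂ) (x₁ x₂ : Fin L → ℂ)
    (hs₁ : (Function.support x₁).ncard ≤ N)
    (hs₂ : (Function.support x₂).ncard ≤ N)
    (h₁ : B.mulVec x₁ = z) (h₂ : B.mulVec x₂ = z) :
    x₁ = x₂ := by
  set S : Set ℕ := {k | k ≤ L ∧ ∀ s : Finset (Fin L), s.card = k →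
    LinearIndependent ℂ (fun j : s => B.transpose (j : Fin L))} with hS
  have h0 : (0 : ℕ) ∈ S := by
    refine ⟨Nat.zero_le _, fun s hs => ?_⟩
    have : s = ∅ := Finset.card_eq_zero.mp hs
    subst this
    exact linearIndependent_empty_type
  have hbdd : BddAbove S := ⟨L, fun k hk => hk.1⟩
  have hmem : sSup S ∈ S := Nat.sSup_mem ⟨0, h0⟩ hbdd
  -- sSup S = kruskalRank B
  have hkrS : kruskalRank B = sSup S := rfl
  rw [hkrS] at hkr
  have hL : 2 * N ≤ L := le_trans hkr hmem.1
  -- downward closure: 2*N ∈ S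
  have h2N : ∀ s : Finset (Fin L), s.card = 2 * N →
      LinearIndependent ℂ (fun j : s => B.transpose (j : Fin L)) := by
    intro s hs
    obtain ⟨t, hst, htc⟩ := Finset.exists_superset_card_eq (le_trans hs.le hkr)
      (by simpa using hmem.1)
    have hli := hmem.2 t htc
    exact hli.comp (fun j : s => (⟨j.1, hst j.2⟩ : t))
      (fun a b hab => by have h := congrArg (fun x : t => (x : Fin L)) hab; exact Subtype.ext h)
  -- difference vector
  set d : Fin L → ℂ := x₁ - x₂ with hd
  have hBd : B.mulVec d = 0 := by
    rw [hd, Matrix.mulVec_sub, h₁, h₂, sub_self]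
  have hsupp : Function.support d ⊆ Function.support x₁ ∪ Function.support x₂ :=
    Function.support_sub x₁ x₂
  have hcard : (Function.support d).ncard ≤ 2 * N := by
    calc (Function.support d).ncard
        ≤ (Function.support x₁ ∪ Function.support x₂).ncard :=
          Set.ncard_le_ncard hsupp (Set.toFinite _)
      _ ≤ (Function.support x₁).ncard + (Function.support x₂).ncard :=
          Set.ncard_union_le _ _
      _ ≤ 2 * N := by omega
  -- extend support to a set of size 2N
  have hfin : (Function.support d).Finite := Set.toFinite _
  obtain ⟨s, hss, hsc⟩ := Finset.exists_superset_card_eq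
    (s := hfin.toFinset) (n := 2 * N)
    (by rwa [← Set.ncard_eq_toFinset_card _ hfin]) (by simpa using hL)
  have hli := h2N s hsc
  have hzero : ∀ j : s, d (j : Fin L) = 0 := by
    apply Fintype.linearIndependent_iff.mp hli (fun j => d (j : Fin L))
    funext i
    rw [Finset.sum_apply]
    simp only [Pi.smul_apply, Matrix.transpose_apply, smul_eq_mul, Pi.zero_apply]
    rw [Finset.sum_coe_sort s (fun j => d j * B i j)]
    have hsum2 : ∑ j ∈ s, d j * B i j = ∑ j, d j * B i j := by
      apply Finset.sum_subset (Finset.subset_univ s)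
      intro j _ hj
      have : d j = 0 := by
        by_contra h
        exact hj (hss (hfin.mem_toFinset.mpr h))
      simp [this]
    rw [hsum2]
    have := congrFun hBd i
    simpa [Matrix.mulVec, dotProduct, mul_comm] using this
  have hdz : d = 0 := by
    funext j
    by_cases hj : j ∈ s
    · exact hzero ⟨j, hj⟩
    · by_contra h
      exact hj (hss (hfin.mem_toFinset.mpr h))
  have := sub_eq_zero.mp hdz
  exact this
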